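/- Let B be a unital *-subalgebra of M_n and Φ : M_n → M_m a quantum channel. Then Φ privatizes B to a state (i.e., there is a density matrix ρ with Φ(B) = tr(B)ρ for all B ∈ B) if and only if B is quasiorthogonal to the range of Φ†, i.e., tr(B Φ†(X)) = n^{-1} tr(B) tr(Φ†(X)) for all B ∈ B and X ∈ M_m. -/

import Mathlib

open Matrix ComplexOrder

/-- The completely positive map with Kraus operators `V i`. -/
noncomputable def krausMap {d n m : ℕ} (V : Fin d → Matrix (Fin m) (Fin n) ℂ) :
    Matrix (Fin n) (Fin n) ℂ →ₗ[ℂ] Matrix (Fin m) (Fin m) ℂ where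
  toFun X := ∑ i, V i * X * (V i)ᴴ
  map_add' X Y := by simp [Matrix.mul_add, Matrix.add_mul, Finset.sum_add_distrib]
  map_smul' c X := by simp [Matrix.mul_smul, Matrix.smul_mul, Finset.smul_sum]

/-- The complementary map `Φ^C(ρ) = ∑_{i,j} tr(ρ V_j* V_i) E_{ij}`. -/
noncomputable def complMap {d n m : ℕ} (V : Fin d → Matrix (Fin m) (Fin n) ℂ) :
    Matrix (Fin n) (Fin n) ℂ →ₗ[ℂ] Matrix (Fin d) (Fin d) ℂ where
  toFun X := Matrix.of fun i j => (X * ((V j)ᴴ * V i)).trace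
  map_add' X Y := by
    ext i j
    simp [Matrix.add_mul]
  map_smul' c X := by
    ext i j
    simp [Matrix.smul_mul]

/-- The compression map `P_Q(X) = Q X Q`. -/
noncomputable def comprMap {n : ℕ} (Q : Matrix (Fin n) (Fin n) ℂ) :
    Matrix (Fin n) (Fin n) ℂ →ₗ[ℂ] Matrix (Fin n) (Fin n) ℂ where
  toFun X := Q * X * Q
  map_add' X Y := by simp [Matrix.mul_add, Matrix.add_mul]
  map_smul' c X := by simp [Matrix.mul_smul, Matrix.smul_mul]

/-- The orthogonal complement of a set of matrices with respect to the trace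
(Hilbert–Schmidt) inner product `⟨A, B⟩ = tr(A* B)`. -/
noncomputable def traceOrthCompl {n : ℕ} (S : Set (Matrix (Fin n) (Fin n) ℂ)) :
    Submodule ℂ (Matrix (Fin n) (Fin n) ℂ) where
  carrier := {X | ∀ A ∈ S, (Aᴴ * X).trace = 0}
  add_mem' := by
    intro a b ha hb A hA
    simp [Matrix.mul_add, ha A hA, hb A hA]
  zero_mem' := by intro A hA; simp
  smul_mem' := by
    intro c x hx A hA
    simp [Matrix.mul_smul, hx A hA]

/-- The commutant of a set of matrices, as a submodule of `M_n`. -/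
noncomputable def commutantSub {n : ℕ} (S : Set (Matrix (Fin n) (Fin n) ℂ)) :
    Submodule ℂ (Matrix (Fin n) (Fin n) ℂ) where
  carrier := {X | ∀ A ∈ S, X * A = A * X}
  add_mem' := by
    intro a b ha hb A hA
    simp [Matrix.mul_add, Matrix.add_mul, ha A hA, hb A hA]
  zero_mem' := by intro A hA; simp
  smul_mem' := by
    intro c x hx A hA
    simp [Matrix.mul_smul, Matrix.smul_mul, hx A hA]

/-- The multiplicative domain of a linear map on `M_n`, as a set. -/
noncomputable def multDomain {n m : ℕ}
    (Φ : Matrix (Fin n) (Fin n) ℂ →ₗ[ℂ] Matrix (Fin m) (Fin m) ℂ) :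
    Set (Matrix (Fin n) (Fin n) ℂ) :=
  {A | ∀ X, Φ (A * X) = Φ A * Φ X ∧ Φ (X * A) = Φ X * Φ A}

lemma kraus_adjoint_trace {d n m : ℕ} (V : Fin d → Matrix (Fin m) (Fin n) ℂ)
    (b : Matrix (Fin n) (Fin n) ℂ) (X : Matrix (Fin m) (Fin m) ℂ) :
    (b * krausMap (fun i => (V i)ᴴ) X).trace = (krausMap V b * X).trace := by
  simp only [krausMap, LinearMap.coe_mk, AddHom.coe_mk, Finset.mul_sum, Finset.sum_mul,
    trace_sum, conjTranspose_conjTranspose]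
  refine Finset.sum_congr rfl fun i _ => ?_
  rw [show b * ((V i)ᴴ * X * V i) = (b * (V i)ᴴ * X) * V i by
      simp only [Matrix.mul_assoc], trace_mul_comm]
  simp only [Matrix.mul_assoc]

lemma eq_of_trace_mul_eq {m : ℕ} {A C : Matrix (Fin m) (Fin m) ℂ}
    (h : ∀ X, (A * X).trace = (C * X).trace) : A = C := by
  ext i j
  have := h (single j i 1)
  simpa [trace, mul_apply, single, mul_ite, ite_and] using this

lemma kraus_trace {d n m : ℕ} (V : Fin d → Matrix (Fin m) (Fin n) ℂ)
    (hV : ∑ i, (V i)ᴴ * V i = 1) (A : Matrix (Fin n) (Fin n) ℂ) :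
    (krausMap V A).trace = A.trace := by
  simp only [krausMap, LinearMap.coe_mk, AddHom.coe_mk, trace_sum]
  have : ∀ i, (V i * A * (V i)ᴴ).trace = ((V i)ᴴ * V i * A).trace := by
    intro i
    rw [trace_mul_comm]
    simp only [Matrix.mul_assoc]
  simp only [this, ← trace_sum, ← Finset.sum_mul, hV, Matrix.one_mul]

lemma kraus_posSemidef {d n m : ℕ} (V : Fin d → Matrix (Fin m) (Fin n) ℂ)
    {A : Matrix (Fin n) (Fin n) ℂ} (hA : A.PosSemidef) :
    (krausMap V A).PosSemidef := by
  simp only [krausMap, LinearMap.coe_mk, AddHom.coe_mk]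
  refine Finset.sum_induction _ _ (fun a b ha hb => ha.add hb) .zero ?_
  exact fun i _ => hA.mul_mul_conjTranspose_same (V i)

/-- a unital *-subalgebra `B ⊆ M_n` is privatized to a state by the channel
`Φ : M_n → M_m` iff `B` is quasiorthogonal to the range of `Φ†`:
`tr(B Φ†(X)) = n⁻¹ tr(B) tr(Φ†(X))` for all `B ∈ B`, `X ∈ M_m`. -/
theorem stmt_15 {d n m : ℕ} (hn : 0 < n)
    (V : Fin d → Matrix (Fin m) (Fin n) ℂ)
    (hV : ∑ i, (V i)ᴴ * V i = 1)
    (B : StarSubalgebra ℂ (Matrix (Fin n) (Fin n) ℂ)) :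
    (∃ ρ : Matrix (Fin m) (Fin m) ℂ, ρ.PosSemidef ∧ ρ.trace = 1 ∧
        ∀ b ∈ B, krausMap V b = b.trace • ρ) ↔
      (∀ b ∈ B, ∀ X : Matrix (Fin m) (Fin m) ℂ,
        (b * krausMap (fun i => (V i)ᴴ) X).trace =
          (n : ℂ)⁻¹ * b.trace * (krausMap (fun i => (V i)ᴴ) X).trace) := by
  have hn' : (n : ℂ) ≠ 0 := Nat.cast_ne_zero.mpr hn.ne'
  constructor
  · rintro ⟨ρ, hρ, htr, hpriv⟩ b hb X
    have h1 : (krausMap (fun i => (V i)ᴴ) X).trace = (krausMap V 1 * X).trace := by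
      rw [← kraus_adjoint_trace, Matrix.one_mul]
    rw [kraus_adjoint_trace, h1, hpriv b hb, hpriv 1 B.one_mem]
    simp only [Matrix.smul_mul, trace_smul, trace_one, smul_eq_mul, Fintype.card_fin]
    field_simp
  · intro h
    refine ⟨krausMap V ((n : ℂ)⁻¹ • 1), ?_, ?_, ?_⟩
    · apply kraus_posSemidef
      have heq : ((n : ℂ)⁻¹ • (1 : Matrix (Fin n) (Fin n) ℂ)) =
          diagonal (fun _ => (n : ℂ)⁻¹) := by
        ext i j
        by_cases hij : i = j <;> simp [diagonal, hij]
      rw [heq]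
      refine posSemidef_diagonal_iff.mpr fun i => ?_
      have : ((n : ℂ))⁻¹ = (((n : ℝ)⁻¹ : ℝ) : ℂ) := by push_cast; ring
      rw [this]
      exact Complex.zero_le_real.mpr (by positivity)
    · rw [kraus_trace V hV]
      simp only [trace_smul, trace_one, smul_eq_mul, Fintype.card_fin]
      field_simp
    · intro b hb
      apply eq_of_trace_mul_eq
      intro X
      rw [← kraus_adjoint_trace, h b hb X]
      have h1 : (krausMap (fun i => (V i)ᴴ) X).trace = (krausMap V 1 * X).trace := by
        rw [← kraus_adjoint_trace, Matrix.one_mul]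
      rw [h1, _root_.map_smul]
      simp only [Matrix.smul_mul, trace_smul, smul_eq_mul]
      ring
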